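/- Let b, b' ∈ ℝ with b > β ≥ 0 and b' ≤ β, and suppose |tanh(b) − tanh(b')| ≤ ε with tanh(β) + ε < 1. Then b ≤ β + ε/(1 − (tanh(β) + ε)²). -/

import Mathlib

lemma my_hasDerivAt_tanh (x : ℝ) :
    HasDerivAt Real.tanh (1 - Real.tanh x ^ 2) x := by
  have hc : Real.cosh x ≠ 0 := (Real.cosh_pos x).ne'
  have h := (Real.hasDerivAt_sinh x).div (Real.hasDerivAt_cosh x) hc
  have heq : (Real.cosh x * Real.cosh x - Real.sinh x * Real.sinh x) / Real.cosh x ^ 2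
      = 1 - Real.tanh x ^ 2 := by
    rw [Real.tanh_eq_sinh_div_cosh]
    have := Real.cosh_sq_sub_sinh_sq x
    field_simp
  have hfun : (Real.sinh / Real.cosh) = Real.tanh := by
    funext y; rw [Pi.div_apply, Real.tanh_eq_sinh_div_cosh]
  rw [heq, hfun] at h
  exact h

lemma my_deriv_tanh_pos (x : ℝ) : 0 < 1 - Real.tanh x ^ 2 := by
  have hc : 0 < Real.cosh x := Real.cosh_pos x
  have hid := Real.cosh_sq_sub_sinh_sq x
  rw [Real.tanh_eq_sinh_div_cosh, div_pow, sub_pos, div_lt_one (by positivity)]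
  nlinarith

lemma my_tanh_strictMono : StrictMono Real.tanh := by
  exact strictMono_of_hasDerivAt_pos my_hasDerivAt_tanh my_deriv_tanh_pos

theorem stmt_9 (b b' β ε : ℝ) (hβ : 0 ≤ β) (hb : β < b) (hb' : b' ≤ β)
    (h : |Real.tanh b - Real.tanh b'| ≤ ε) (hε : Real.tanh β + ε < 1) :
    b ≤ β + ε / (1 - (Real.tanh β + ε) ^ 2) := by
  have hmono := my_tanh_strictMono
  have htb' : Real.tanh b' ≤ Real.tanh β := hmono.monotone hb'
  have htβb : Real.tanh β < Real.tanh b := hmono hb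
  have habs : Real.tanh b - Real.tanh b' ≤ ε := (abs_le.mp h).2
  have hbe : Real.tanh b ≤ Real.tanh β + ε := by linarith
  have htβ0 : 0 ≤ Real.tanh β := by
    have := hmono.monotone hβ; simpa [Real.tanh_zero] using this
  have htb0 : 0 ≤ Real.tanh b := le_trans htβ0 htβb.le
  -- MVT on [β, b]
  obtain ⟨c, hc, hceq⟩ := exists_hasDerivAt_eq_slope Real.tanh
    (fun x => 1 - Real.tanh x ^ 2) hb (fun x _ => (my_hasDerivAt_tanh x).continuousAt.continuousWithinAt)
    (fun x _ => my_hasDerivAt_tanh x)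
  have htc : Real.tanh c ≤ Real.tanh b := hmono.monotone hc.2.le
  have htc0 : 0 ≤ Real.tanh c := le_trans htβ0 (hmono.monotone hc.1.le)
  have hD : 0 < 1 - (Real.tanh β + ε) ^ 2 := by
    have h0 : 0 ≤ Real.tanh β + ε := le_trans htb0 hbe
    nlinarith
  have hslope : (Real.tanh b - Real.tanh β) / (b - β) = 1 - Real.tanh c ^ 2 := hceq.symm
  have hderge : 1 - (Real.tanh β + ε) ^ 2 ≤ 1 - Real.tanh c ^ 2 := by
    nlinarith [le_trans htc (hbe)]
  have hbβ : 0 < b - β := by linarith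
  have hkey : (b - β) * (1 - (Real.tanh β + ε) ^ 2) ≤ ε := by
    have h1 : (b - β) * (1 - Real.tanh c ^ 2) = Real.tanh b - Real.tanh β := by
      field_simp at hslope
      linarith [hslope]
    nlinarith
  rw [← sub_le_iff_le_add']
  exact (le_div_iff₀ hD).mpr (by nlinarith [hkey])
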